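/- arXiv:1505.02729 — 2 statements merged into one kernel-verified Lean document; each statement's English description precedes it below -/
import Mathlib

section
/- Let Δ_n = {v_0,...,v_n} be the vertices of a regular n-simplex inscribed in the unit sphere of R^n (unit norms, pairwise squared distances 2(n+1)/n, zero sum). For any nonempty bipartition with centroids a⁽¹⁾ and a⁽²⁾, the difference a⁽¹⁾ − a⁽²⁾ is orthogonal to a⁽ⁱ⁾ − v_j for each i ∈ {1,2} and each vertex v_j in the corresponding part: (a⁽¹⁾ − a⁽²⁾) · (a⁽ⁱ⁾ − v_j) = 0. -/
theorem simplex_bipartition_orthogonality (n : ℕ) (hn : 1 ≤ n)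
    (v : Fin (n + 1) → EuclideanSpace ℝ (Fin n))
    (hnorm : ∀ i, ‖v i‖ ^ 2 = 1)
    (hdist : ∀ i j, i ≠ j → ‖v i - v j‖ ^ 2 = 2 * (n + 1) / n)
    (hsum : ∑ i, v i = 0)
    (S : Finset (Fin (n + 1))) (hS : S.Nonempty) (hSc : Sᶜ.Nonempty)
    (a₁ a₂ : EuclideanSpace ℝ (Fin n))
    (ha₁ : a₁ = (S.card : ℝ)⁻¹ • ∑ i ∈ S, v i)
    (ha₂ : a₂ = (Sᶜ.card : ℝ)⁻¹ • ∑ i ∈ Sᶜ, v i) :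
    (∀ j ∈ S, inner ℝ (a₁ - a₂) (a₁ - v j) = (0 : ℝ)) ∧
    (∀ j ∈ Sᶜ, inner ℝ (a₁ - a₂) (a₂ - v j) = (0 : ℝ)) := by
  have hn0 : (n : ℝ) ≠ 0 := Nat.cast_ne_zero.mpr (by omega)
  set s : EuclideanSpace ℝ (Fin n) := ∑ i ∈ S, v i with hs
  have hip : ∀ i j, (inner ℝ (v i) (v j) : ℝ) = if i = j then 1 else -(1/(n:ℝ)) := by
    intro i j
    by_cases h : i = j
    · simp only [h, if_true]
      rw [real_inner_self_eq_norm_sq, hnorm]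
    · simp only [h, if_false]
      have hd := hdist i j h
      have e : ‖v i - v j‖^2 = ‖v i‖^2 - 2*inner ℝ (v i) (v j) + ‖v j‖^2 :=
        norm_sub_sq_real _ _
      rw [hnorm, hnorm, hd] at e
      rw [div_eq_iff hn0] at e
      have hmul : (inner ℝ (v i) (v j) : ℝ) * n = -1 := by linear_combination e/2
      exact (eq_div_of_mul_eq hn0 hmul).trans (neg_div (n:ℝ) 1)
  have key : ∀ j, (inner ℝ s (v j) : ℝ)
      = (if j ∈ S then (1:ℝ) + 1/n else 0) - S.card / n := by
    intro j
    rw [hs, sum_inner]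
    have h1 : ∀ i ∈ S, (inner ℝ (v i) (v j) : ℝ)
        = (if i = j then (1:ℝ)+1/n else 0) + (-(1/(n:ℝ))) := by
      intro i _
      rw [hip]
      by_cases h : i = j
      · simp only [h, if_true]; ring
      · simp only [h, if_false]; ring
    rw [Finset.sum_congr rfl h1, Finset.sum_add_distrib,
      Finset.sum_ite_eq' S j (fun _ => (1:ℝ)+1/n), Finset.sum_const, nsmul_eq_mul]
    ring
  have hself : (inner ℝ s s : ℝ) = S.card * (1 + 1/n - S.card/n) := by
    calc (inner ℝ s s : ℝ) = ∑ j ∈ S, inner ℝ s (v j) := by rw [← inner_sum, hs]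
      _ = ∑ _j ∈ S, ((1 + 1/n) - (S.card:ℝ)/n) :=
          Finset.sum_congr rfl (fun j hj => by rw [key]; simp [hj])
      _ = S.card * (1 + 1/n - S.card/n) := by
          rw [Finset.sum_const, nsmul_eq_mul]
  have hcomp : ∑ i ∈ Sᶜ, v i = -s := by
    have h := Finset.sum_add_sum_compl S v
    rw [hsum] at h
    exact eq_neg_of_add_eq_zero_right h
  have hcard : S.card + Sᶜ.card = n + 1 := by
    rw [Finset.card_add_card_compl]
    simp
  have hkr : (0:ℝ) < S.card := by exact_mod_cast hS.card_pos
  have hmr : (0:ℝ) < Sᶜ.card := by exact_mod_cast hSc.card_pos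
  have hkne : (S.card : ℝ) ≠ 0 := ne_of_gt hkr
  have hmne : (Sᶜ.card : ℝ) ≠ 0 := ne_of_gt hmr
  have hkm : (S.card : ℝ) + Sᶜ.card = n + 1 := by exact_mod_cast hcard
  have hdiff : a₁ - a₂ = ((S.card:ℝ)⁻¹ + (Sᶜ.card:ℝ)⁻¹) • s := by
    rw [ha₁, ha₂, hcomp, smul_neg, sub_neg_eq_add, add_smul]
  constructor
  · intro j hj
    rw [hdiff, ha₁, real_inner_smul_left, inner_sub_right,
      real_inner_smul_right, hself, key]
    simp only [hj, if_true]
    field_simp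
    ring
  · intro j hj
    have hj' : j ∉ S := Finset.mem_compl.mp hj
    rw [hdiff, ha₂, hcomp, real_inner_smul_left, inner_sub_right,
      real_inner_smul_right, inner_neg_right, hself, key]
    simp only [hj', if_false]
    have h1 : (1:ℝ) + 1/n - S.card/n = Sᶜ.card / n := by
      field_simp
      linarith
    rw [h1]
    field_simp
    ring
end

section
/- Suppose α is a random variable uniformly distributed on {1/2 − ε/2, 1/2 + ε/2} for 0 < ε < 1, and conditional on α, ξ_1,...,ξ_m are i.i.d. Bernoulli(α) random variables. Then for any function f : {0,1}^m → {1/2 − ε/2, 1/2 + ε/2}, the probability of misidentifying the bias satisfies P[f(ξ_1,...,ξ_m) ≠ α] > (1/4)(1 − √(1 − exp(−2⌈m/2⌉ε²/(1 − ε²)))). -/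
/-- Bias of the coin: `true` corresponds to `α₊ = 1/2 + ε/2`, `false` to
`α₋ = 1/2 - ε/2`. -/
noncomputable def coinBias (ε : ℝ) (a : Bool) : ℝ :=
  if a then 1 / 2 + ε / 2 else 1 / 2 - ε / 2

open Finset

/-- square root of a product of nonnegatives is the product of square roots -/
lemma sqrt_prod'' {ι : Type*} (s : Finset ι) (g : ι → ℝ) (hg : ∀ i ∈ s, 0 ≤ g i) :
    Real.sqrt (∏ i ∈ s, g i) = ∏ i ∈ s, Real.sqrt (g i) := by
  induction s using Finset.cons_induction with
  | empty => simp
  | cons a s ha ih =>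
    rw [Finset.prod_cons, Finset.prod_cons,
      Real.sqrt_mul (hg a (Finset.mem_cons_self a s)),
      ih (fun i hi => hg i (Finset.mem_cons_of_mem hi))]

theorem single_coin_lower_bound (m : ℕ) (hm : 1 ≤ m) (ε : ℝ)
    (hε0 : 0 < ε) (hε1 : ε < 1) (f : (Fin m → Bool) → Bool) :
    (1 / 4 : ℝ) *
        (1 - Real.sqrt (1 - Real.exp
          (-2 * (⌈(m : ℝ) / 2⌉ : ℝ) * ε ^ 2 / (1 - ε ^ 2))))
      < ∑ a : Bool, ∑ ξ : Fin m → Bool,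
          (1 / 2 : ℝ) *
            (∏ i, (if ξ i then coinBias ε a else 1 - coinBias ε a)) *
            (if f ξ ≠ a then 1 else 0) := by
  have hε2 : 0 < 1 - ε ^ 2 := by nlinarith
  set w : Bool → Bool → ℝ := fun a b => if b then coinBias ε a else 1 - coinBias ε a with hw
  have hw_nonneg : ∀ a b, 0 ≤ w a b := by
    intro a b
    simp only [hw, coinBias]
    cases a <;> cases b <;> simp <;> nlinarith
  have hw_sum : ∀ a, w a true + w a false = 1 := by
    intro a; cases a <;> simp [hw, coinBias] <;> ring
  set p : Bool → (Fin m → Bool) → ℝ := fun a ξ => ∏ i, w a (ξ i) with hp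
  have hp_nonneg : ∀ a ξ, 0 ≤ p a ξ := fun a ξ =>
    Finset.prod_nonneg (fun i _ => hw_nonneg a (ξ i))
  have hp_sum : ∀ a, ∑ ξ : Fin m → Bool, p a ξ = 1 := by
    intro a
    have := Finset.prod_univ_sum (fun _ : Fin m => (Finset.univ : Finset Bool))
      (fun _ b => w a b)
    rw [Fintype.piFinset_univ] at this
    rw [hp, ← this]
    simp only [Fintype.sum_bool, hw_sum]
    simp
  -- Bhattacharyya computation
  have hcoord : ∀ b, w true b * w false b = (1 - ε ^ 2) / 4 := by
    intro b; cases b <;> simp [hw, coinBias] <;> ring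
  have hsqrt4 : Real.sqrt 4 = 2 := by
    rw [show (4 : ℝ) = 2 ^ 2 by norm_num, Real.sqrt_sq (by norm_num)]
  have hB : ∑ ξ : Fin m → Bool, Real.sqrt (p true ξ * p false ξ)
      = Real.sqrt (1 - ε ^ 2) ^ m := by
    have h1 : ∀ ξ : Fin m → Bool, Real.sqrt (p true ξ * p false ξ)
        = ∏ i, Real.sqrt (w true (ξ i) * w false (ξ i)) := by
      intro ξ
      rw [hp, ← Finset.prod_mul_distrib,
        sqrt_prod'' _ _ (fun i _ => mul_nonneg (hw_nonneg true (ξ i)) (hw_nonneg false (ξ i)))]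
    simp only [h1]
    have := Finset.prod_univ_sum (fun _ : Fin m => (Finset.univ : Finset Bool))
      (fun _ b => Real.sqrt (w true b * w false b))
    rw [Fintype.piFinset_univ] at this
    rw [← this]
    have hone : ∀ b, Real.sqrt (w true b * w false b) = Real.sqrt (1 - ε ^ 2) / 2 := by
      intro b
      rw [hcoord b, Real.sqrt_div (le_of_lt hε2), hsqrt4]
    have : ∑ b : Bool, Real.sqrt (w true b * w false b) = Real.sqrt (1 - ε ^ 2) := by
      rw [Fintype.sum_bool, hone, hone]; ring
    rw [Finset.prod_const]
    simp only [Fintype.sum_bool] at this ⊢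
    rw [this, Finset.card_univ, Fintype.card_fin]
  -- Cauchy-Schwarz: sum of min lower bound
  set M : (Fin m → Bool) → ℝ := fun ξ => min (p true ξ) (p false ξ) with hM
  have hmax_sum : ∑ ξ : Fin m → Bool, max (p true ξ) (p false ξ) ≤ 2 := by
    calc ∑ ξ : Fin m → Bool, max (p true ξ) (p false ξ)
        ≤ ∑ ξ : Fin m → Bool, (p true ξ + p false ξ) := by
          apply Finset.sum_le_sum
          intro ξ _
          exact max_le (by linarith [hp_nonneg false ξ]) (by linarith [hp_nonneg true ξ])
      _ = 2 := by rw [Finset.sum_add_distrib, hp_sum, hp_sum]; norm_num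
  have hCS : ((1 - ε ^ 2) ^ m : ℝ) ≤ (∑ ξ : Fin m → Bool, M ξ) * 2 := by
    have key := Finset.sum_mul_sq_le_sq_mul_sq (Finset.univ : Finset (Fin m → Bool))
      (fun ξ => Real.sqrt (M ξ)) (fun ξ => Real.sqrt (max (p true ξ) (p false ξ)))
    have heq : ∀ ξ : Fin m → Bool,
        Real.sqrt (M ξ) * Real.sqrt (max (p true ξ) (p false ξ))
          = Real.sqrt (p true ξ * p false ξ) := by
      intro ξ
      rw [← Real.sqrt_mul (le_min (hp_nonneg true ξ) (hp_nonneg false ξ)), min_mul_max]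
    simp only [heq] at key
    have hsq : ∀ ξ : Fin m → Bool, Real.sqrt (M ξ) ^ 2 = M ξ := fun ξ =>
      Real.sq_sqrt (le_min (hp_nonneg true ξ) (hp_nonneg false ξ))
    have hsq' : ∀ ξ : Fin m → Bool, Real.sqrt (max (p true ξ) (p false ξ)) ^ 2
        = max (p true ξ) (p false ξ) := fun ξ =>
      Real.sq_sqrt (le_max_of_le_left (hp_nonneg true ξ))
    simp only [hsq, hsq'] at key
    rw [hB] at key
    have hBsq : (Real.sqrt (1 - ε ^ 2) ^ m) ^ 2 = (1 - ε ^ 2) ^ m := by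
      rw [← pow_mul, mul_comm m 2, pow_mul, Real.sq_sqrt (le_of_lt hε2)]
    rw [hBsq] at key
    have hMnonneg : 0 ≤ ∑ ξ : Fin m → Bool, M ξ :=
      Finset.sum_nonneg (fun ξ _ => le_min (hp_nonneg true ξ) (hp_nonneg false ξ))
    nlinarith [hmax_sum]
  -- the error probability equals sum over ξ of (1/2) p_{¬f ξ} ξ, lower bounded by min
  have hRHS : (1 / 4 : ℝ) * (1 - ε ^ 2) ^ m
      ≤ ∑ a : Bool, ∑ ξ : Fin m → Bool,
          (1 / 2 : ℝ) * (∏ i, (if ξ i then coinBias ε a else 1 - coinBias ε a)) *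
            (if f ξ ≠ a then 1 else 0) := by
    rw [Finset.sum_comm]
    have hterm : ∀ ξ : Fin m → Bool,
        (1 / 2 : ℝ) * M ξ ≤ ∑ a : Bool,
          (1 / 2 : ℝ) * (∏ i, (if ξ i then coinBias ε a else 1 - coinBias ε a)) *
            (if f ξ ≠ a then 1 else 0) := by
      intro ξ
      rw [Fintype.sum_bool]
      have hpt : (∏ i, (if ξ i then coinBias ε true else 1 - coinBias ε true)) = p true ξ := rfl
      have hpf : (∏ i, (if ξ i then coinBias ε false else 1 - coinBias ε false)) = p false ξ := rfl
      rw [hpt, hpf]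
      cases hfξ : f ξ <;> simp [hfξ] <;>
        nlinarith [min_le_left (p true ξ) (p false ξ), min_le_right (p true ξ) (p false ξ),
          hp_nonneg true ξ, hp_nonneg false ξ]
    calc (1 / 4 : ℝ) * (1 - ε ^ 2) ^ m ≤ (1 / 2) * ∑ ξ : Fin m → Bool, M ξ := by linarith [hCS]
      _ = ∑ ξ : Fin m → Bool, (1 / 2 : ℝ) * M ξ := by rw [Finset.mul_sum]
      _ ≤ _ := Finset.sum_le_sum (fun ξ _ => hterm ξ)
  -- numeric part
  set c : ℝ := 2 * (⌈(m : ℝ) / 2⌉ : ℝ) * ε ^ 2 / (1 - ε ^ 2) with hc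
  have hceil_pos : (0 : ℝ) < (⌈(m : ℝ) / 2⌉ : ℤ) := by
    have : (0 : ℝ) < (m : ℝ) / 2 := by positivity
    exact_mod_cast Int.ceil_pos.mpr this
  have hc_pos : 0 < c := by
    rw [hc]
    apply div_pos _ hε2
    positivity
  have hm_le : (m : ℝ) ≤ 2 * (⌈(m : ℝ) / 2⌉ : ℤ) := by
    have := Int.le_ceil ((m : ℝ) / 2)
    linarith
  -- exp(-c) ≤ (1-ε²)^m
  have hlog : -Real.log (1 - ε ^ 2) ≤ ε ^ 2 / (1 - ε ^ 2) := by
    have h := Real.log_le_sub_one_of_pos (x := (1 - ε ^ 2)⁻¹) (by positivity)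
    rw [Real.log_inv] at h
    have : (1 - ε ^ 2)⁻¹ - 1 = ε ^ 2 / (1 - ε ^ 2) := by field_simp; ring
    linarith [this ▸ h]
  have hexple : Real.exp (-c) ≤ (1 - ε ^ 2) ^ m := by
    have h1 : -c ≤ (m : ℝ) * Real.log (1 - ε ^ 2) := by
      have h2 : (m : ℝ) * (-Real.log (1 - ε ^ 2)) ≤ (m : ℝ) * (ε ^ 2 / (1 - ε ^ 2)) := by
        apply mul_le_mul_of_nonneg_left hlog (by positivity)
      have h3 : (m : ℝ) * (ε ^ 2 / (1 - ε ^ 2)) ≤ c := by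
        rw [hc, mul_div_assoc]
        apply mul_le_mul_of_nonneg_right hm_le (by positivity)
      nlinarith
    calc Real.exp (-c) ≤ Real.exp ((m : ℝ) * Real.log (1 - ε ^ 2)) := Real.exp_le_exp.mpr h1
      _ = (1 - ε ^ 2) ^ m := by
          rw [Real.exp_nat_mul, Real.exp_log hε2]
  -- 1 - sqrt(1 - exp(-c)) < exp(-c)
  have hstrict : 1 - Real.sqrt (1 - Real.exp (-c)) < Real.exp (-c) := by
    set t := Real.exp (-c) with ht
    have ht0 : 0 < t := Real.exp_pos _
    have ht1 : t < 1 := by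
      rw [ht, show (1:ℝ) = Real.exp 0 by simp]
      exact Real.exp_lt_exp.mpr (by linarith)
    have hs : 1 - t < Real.sqrt (1 - t) := by
      rw [Real.lt_sqrt (by linarith)]
      nlinarith
    linarith
  have harg : -2 * (⌈(m : ℝ) / 2⌉ : ℝ) * ε ^ 2 / (1 - ε ^ 2) = -c := by
    rw [hc]; push_cast; ring
  rw [harg]
  calc (1 / 4 : ℝ) * (1 - Real.sqrt (1 - Real.exp (-c)))
      < (1 / 4 : ℝ) * Real.exp (-c) := by linarith
    _ ≤ (1 / 4 : ℝ) * (1 - ε ^ 2) ^ m := by linarith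
    _ ≤ _ := hRHS
end
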